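/- Let M and N be two matroids on a common finite ground set E, and let e, f ∈ E be distinct. Assume that every nonempty wave for (M, N) contains e. Then in the pair (M/f, N\f), either E − f is (the underlying set of) a cowave, or there is a hindrance focusing on e. -/

import Mathlib

open Matroid Set

variable {α : Type*}

/-- Deletion of a set from a matroid: restriction to the complement. -/
def Matroid.del (M : Matroid α) (D : Set α) : Matroid α := M ↾ (M.E \ D)

/-- Contraction of a set in a matroid, defined by duality. -/
def Matroid.con (M : Matroid α) (C : Set α) : Matroid α := ((M✶.del C))✶

/-- A circuit: a minimal dependent set. -/
def IsCircuitOf (M : Matroid α) (C : Set α) : Prop := Minimal M.Dep C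

/-- A wave for the pair `(M, N)`: disjoint sets `SM, SN ⊆ X` spanning `X`
in the respective restrictions. -/
def IsWave (M N : Matroid α) (X SM SN : Set α) : Prop :=
  SM ⊆ X ∧ SN ⊆ X ∧ X ⊆ M.E ∧ Disjoint SM SN ∧
  (M ↾ X).Spanning SM ∧ (N ↾ X).Spanning SN

namespace MIAux

variable {M N : Matroid α} {I J K B X Y Z S : Set α} {x f : α}

lemma del_ground (M : Matroid α) (D : Set α) : (M.del D).E = M.E \ D := rfl

lemma con_ground (M : Matroid α) (C : Set α) : (M.con C).E = M.E \ C := rfl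

lemma del_indep_iff {D : Set α} : (M.del D).Indep I ↔ M.Indep I ∧ I ⊆ M.E \ D :=
  restrict_indep_iff

/-- unfolding of contraction independence via dual bases -/
lemma con_one_indep_aux (hfE : f ∈ M.E) :
    (M.con {f}).Indep I ↔ (∃ B, M✶.IsBasis B (M.E \ {f}) ∧ B ⊆ (M.E \ {f}) \ I) ∧ I ⊆ M.E \ {f} := by
  have hR : M.E \ {f} ⊆ M✶.E := by rw [dual_ground]; exact diff_subset
  have h1 : (M.con {f}).Indep I ↔ (M✶ ↾ (M.E \ {f})).Coindep I := Iff.rfl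
  rw [h1, coindep_iff_exists']
  simp only [restrict_ground_eq]
  constructor
  · rintro ⟨⟨B, hB, hBsub⟩, hIsub⟩
    rw [isBase_restrict_iff hR] at hB
    exact ⟨⟨B, hB, hBsub⟩, hIsub⟩
  · rintro ⟨⟨B, hB, hBsub⟩, hIsub⟩
    refine ⟨⟨B, ?_, hBsub⟩, hIsub⟩
    rw [isBase_restrict_iff hR]
    exact hB

/-- for a nonloop `f`, dual bases of `E \ {f}` are dual bases -/
lemma dual_basis_compl_nonloop (hf : M.Indep {f}) (hB : M✶.IsBasis B (M.E \ {f})) :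
    M✶.IsBase B := by
  obtain ⟨B₀, hB₀, hfB₀⟩ := hf.exists_isBase_superset
  have hB₂ : M✶.IsBase (M.E \ B₀) := hB₀.compl_isBase_dual
  have hB₂R : M.E \ B₀ ⊆ M.E \ {f} := diff_subset_diff_right (by simpa using hfB₀)
  have hsub : M.E \ B₀ ⊆ M✶.closure B := hB.subset_closure.trans' hB₂R |>.trans (le_refl _)
  have hcl : M✶.E ⊆ M✶.closure B := by
    have := closure_subset_closure_of_subset_closure (M := M✶) (hB₂R.trans hB.subset_closure)
    rw [hB₂.closure_eq] at this
    exact this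
  have hsp : M✶.Spanning B := by
    rw [spanning_iff_ground_subset_closure hB.indep.subset_ground]
    exact hcl
  exact hsp.isBase_of_indep hB.indep

lemma base_basis_of_subset {R : Set α} (hB : M.IsBase B) (hBR : B ⊆ R) (hR : R ⊆ M.E) :
    M.IsBasis B R :=
  isBasis_iff_indep_subset_closure.2 ⟨hB.indep, hBR, by rw [hB.closure_eq]; exact hR⟩

lemma con_one_indep (hfE : f ∈ M.E) (hf : M.Indep {f}) :
    (M.con {f}).Indep I ↔ f ∉ I ∧ M.Indep (insert f I) := by
  rw [con_one_indep_aux hfE]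
  constructor
  · rintro ⟨⟨B, hB, hBsub⟩, hIsub⟩
    have hBbase := dual_basis_compl_nonloop hf hB
    have hB₀ : M.IsBase (M.E \ B) := hBbase.compl_isBase_of_dual
    refine ⟨fun hfI => (hIsub hfI).2 rfl, hB₀.indep.subset ?_⟩
    rw [insert_subset_iff]
    refine ⟨⟨hfE, fun hfB => ((hB.subset hfB).2 rfl : False)⟩, fun y hy => ⟨(hIsub hy).1, fun hyB => ?_⟩⟩
    exact (hBsub hyB).2 hy
  · rintro ⟨hfI, hind⟩
    obtain ⟨B₀, hB₀, hsub⟩ := hind.exists_isBase_superset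
    have hIE : I ⊆ M.E := (subset_insert f I).trans hind.subset_ground
    have hIR : I ⊆ M.E \ {f} := subset_diff_singleton hIE hfI
    refine ⟨⟨M.E \ B₀, ?_, ?_⟩, hIR⟩
    · refine base_basis_of_subset hB₀.compl_isBase_dual ?_ (by rw [dual_ground]; exact diff_subset)
      exact diff_subset_diff_right (singleton_subset_iff.2 (hsub (mem_insert f I)))
    · rw [diff_diff]
      refine diff_subset_diff_right ?_
      intro y hy
      rcases hy with hy | hy
      · exact hsub (by simp [mem_singleton_iff.1 hy])
      · exact hsub (mem_insert_of_mem _ hy)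
/-- a loop of `M` can be inserted into any dual-independent set -/
lemma loop_insert_dual_indep (hfE : f ∈ M.E) (hf : ¬ M.Indep {f}) (hK : M✶.Indep K)
    (hfK : f ∉ K) : M✶.Indep (insert f K) := by
  rw [dual_indep_iff_exists'] at hK ⊢
  obtain ⟨hKE, B₀, hB₀, hdisj⟩ := hK
  have hfB₀ : f ∉ B₀ := fun hfB => hf (hB₀.indep.subset (singleton_subset_iff.2 hfB))
  exact ⟨insert_subset hfE hKE, B₀, hB₀, by
    rw [Set.disjoint_left]
    rintro a (rfl | haK)
    · exact hfB₀
    · exact fun hb => hdisj.le_bot ⟨haK, hb⟩⟩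

lemma con_one_eq_del (hfE : f ∈ M.E) (hf : ¬ M.Indep {f}) :
    M.con {f} = M ↾ (M.E \ {f}) := by
  refine ext_indep rfl fun I hI => ?_
  have hIR : I ⊆ M.E \ {f} := hI
  rw [con_one_indep_aux hfE, restrict_indep_iff, and_iff_left hIR, and_iff_left hIR]
  constructor
  · rintro ⟨B, hB, hBsub⟩
    -- B dual-basis of E \ {f}; insert f B is a dual base
    have hfB : f ∉ B := fun h => (hB.subset h).2 rfl
    have hB' : M✶.Indep (insert f B) := loop_insert_dual_indep hfE hf hB.indep hfB
    have hsp : M✶.Spanning (insert f B) := by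
      rw [spanning_iff_ground_subset_closure hB'.subset_ground]
      intro z hz
      rcases eq_or_ne z f with rfl | hzf
      · exact M✶.subset_closure _ hB'.subset_ground (mem_insert _ _)
      · have hzR : z ∈ M.E \ {f} := ⟨hz, hzf⟩
        have : z ∈ M✶.closure B := hB.subset_closure hzR
        exact M✶.closure_subset_closure (subset_insert f B) this
    have hBase : M✶.IsBase (insert f B) := hsp.isBase_of_indep hB'
    have hB₀ : M.IsBase (M.E \ insert f B) := hBase.compl_isBase_of_dual
    refine hB₀.indep.subset fun y hy => ⟨(hIR hy).1, fun hyB => ?_⟩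
    rcases hyB with h | h
    · exact (hIR hy).2 h
    · exact (hBsub h).2 hy
  · intro hind
    obtain ⟨B₀, hB₀, hsub⟩ := hind.exists_isBase_superset
    have hfB₀ : f ∉ B₀ := fun hfB => hf (hB₀.indep.subset (singleton_subset_iff.2 hfB))
    have hB' : M✶.IsBase (M.E \ B₀) := hB₀.compl_isBase_dual
    have hfB' : f ∈ M.E \ B₀ := ⟨hfE, hfB₀⟩
    refine ⟨(M.E \ B₀) \ {f}, ?_, ?_⟩
    · -- basis of E \ {f}
      refine isBasis_iff_indep_subset_closure.2 ⟨hB'.indep.subset diff_subset, ?_, ?_⟩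
      · exact diff_subset_diff_left diff_subset
      · -- E \ {f} ⊆ closure ((E \ B₀) \ {f})
        intro z hz
        by_contra hzcl
        have hzB : z ∉ (M.E \ B₀) \ {f} := fun h => hzcl (M✶.subset_closure _
          (diff_subset.trans (diff_subset.trans (by rw [dual_ground]))) h)
        have hzE : z ∈ M✶.E := hz.1
        have hins : M✶.Indep (insert z ((M.E \ B₀) \ {f})) := by
          rw [(hB'.indep.subset diff_subset).insert_indep_iff_of_notMem hzB]
          exact ⟨hzE, hzcl⟩
        have hfins : f ∉ insert z ((M.E \ B₀) \ {f}) := by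
          simp only [mem_insert_iff, mem_diff, mem_singleton_iff]
          push_neg
          exact ⟨fun h => hz.2 h.symm, fun _ => trivial⟩
        have h2 : M✶.Indep (insert f (insert z ((M.E \ B₀) \ {f}))) :=
          loop_insert_dual_indep hfE hf hins hfins
        have heq : insert f (insert z ((M.E \ B₀) \ {f})) = insert z (M.E \ B₀) := by
          rw [insert_comm]
          congr 1
          rw [insert_diff_singleton, insert_eq_of_mem hfB']
        rw [heq] at h2
        have := hB'.eq_of_subset_indep h2 (subset_insert _ _)
        have hzmem : z ∈ M.E \ B₀ := by rw [this]; exact mem_insert _ _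
        exact hzB ⟨hzmem, hz.2⟩
    · intro y hy
      exact ⟨⟨hy.1.1, hy.2⟩, fun hyI => hy.1.2 (hsub hyI)⟩
/-- The rank of a set in a matroid, as a natural number. -/
noncomputable def rk (M : Matroid α) (X : Set α) : ℕ := (M.exists_isBasis' X).choose.ncard

lemma ncard_rk_of_basis' (h : M.IsBasis' I X) : I.ncard = rk M X := by
  have h2 := (M.exists_isBasis' X).choose_spec
  have h3 := h.encard_eq_encard h2
  rw [rk, Set.ncard_def, Set.ncard_def, h3]

lemma ncard_rk_of_basis (h : M.IsBasis I X) : I.ncard = rk M X := ncard_rk_of_basis' h.isBasis'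

lemma indep_ncard_le_rk (hfin : M.E.Finite) (hI : M.Indep I) (hIX : I ⊆ X) :
    I.ncard ≤ rk M X := by
  obtain ⟨J, hJ, hIJ⟩ := hI.subset_isBasis'_of_subset hIX
  rw [← ncard_rk_of_basis' hJ]
  exact Set.ncard_le_ncard hIJ (hfin.subset hJ.indep.subset_ground)

lemma rk_mono (hfin : M.E.Finite) (hXY : X ⊆ Y) : rk M X ≤ rk M Y := by
  obtain ⟨I, hI⟩ := M.exists_isBasis' X
  rw [← ncard_rk_of_basis' hI]
  exact indep_ncard_le_rk hfin hI.indep (hI.subset.trans hXY)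

lemma rk_le_ncard (hfin : X.Finite) : rk M X ≤ X.ncard := by
  obtain ⟨I, hI⟩ := M.exists_isBasis' X
  rw [← ncard_rk_of_basis' hI]
  exact Set.ncard_le_ncard hI.subset hfin

/-- a spanning criterion for restrictions -/
lemma spanning_restrict_of_rk_le (hfin : M.E.Finite) (hI : M.Indep I) (hIX : I ⊆ X)
    (hX : X ⊆ M.E) (hrk : rk M X ≤ I.ncard) : (M ↾ X).Spanning I := by
  obtain ⟨J, hJ, hIJ⟩ := hI.subset_isBasis'_of_subset hIX
  have hJfin : J.Finite := hfin.subset hJ.indep.subset_ground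
  have : I = J := Set.eq_of_subset_of_ncard_le hIJ (by rw [ncard_rk_of_basis' hJ]; exact hrk) hJfin
  subst this
  exact ((hJ.isBasis hX).restrict_isBase).spanning

lemma rk_submod (hfin : M.E.Finite) (hA : A ⊆ M.E) (hB : B ⊆ M.E) :
    rk M (A ∪ B) + rk M (A ∩ B) ≤ rk M A + rk M B := by
  obtain ⟨I, hI⟩ := M.exists_isBasis (A ∩ B) ((inter_subset_left).trans hA)
  obtain ⟨J, hJ, hIJ⟩ := hI.indep.subset_isBasis_of_subset (hI.subset.trans (inter_subset_left.trans subset_union_left))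
    (union_subset hA hB)
  have hJfin : J.Finite := hfin.subset hJ.indep.subset_ground
  have hIeq : J ∩ (A ∩ B) = I := by
    refine (hI.eq_of_subset_indep (hJ.indep.inter_right _) (subset_inter hIJ hI.subset)
      inter_subset_right).symm
  have hcard : (J ∩ A).ncard + (J ∩ B).ncard = J.ncard + I.ncard := by
    rw [← Set.ncard_union_add_ncard_inter (J ∩ A) (J ∩ B) (hJfin.subset inter_subset_left)
      (hJfin.subset inter_subset_left)]
    rw [← inter_union_distrib_left, ← inter_inter_distrib_left, hIeq,
      inter_eq_self_of_subset_left hJ.subset]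
  have h1 : (J ∩ A).ncard ≤ rk M A :=
    indep_ncard_le_rk hfin (hJ.indep.inter_right _) inter_subset_right
  have h2 : (J ∩ B).ncard ≤ rk M B :=
    indep_ncard_le_rk hfin (hJ.indep.inter_right _) inter_subset_right
  rw [← ncard_rk_of_basis hJ, ← ncard_rk_of_basis hI]
  omega

lemma rk_restrict {R : Set α} (hZR : Z ⊆ R) : rk (M ↾ R) Z = rk M Z := by
  obtain ⟨I, hI⟩ := M.exists_isBasis' Z
  have : (M ↾ R).IsBasis' I Z := by
    rw [isBasis'_restrict_iff, inter_eq_self_of_subset_left hZR]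
    exact ⟨hI, hI.subset.trans hZR⟩
  rw [← ncard_rk_of_basis' this, ncard_rk_of_basis' hI]

lemma rk_singleton_le (M : Matroid α) (x : α) : rk M {x} ≤ 1 := by
  obtain ⟨I, hI⟩ := M.exists_isBasis' {x}
  rw [← ncard_rk_of_basis' hI]
  calc I.ncard ≤ ({x} : Set α).ncard := Set.ncard_le_ncard hI.subset (finite_singleton x)
  _ = 1 := Set.ncard_singleton x

lemma rk_singleton_nonloop (hf : M.Indep {f}) : rk M {f} = 1 := by
  have : M.IsBasis' {f} {f} := by
    rw [isBasis'_iff_isBasis hf.subset_ground]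
    exact hf.isBasis_self
  rw [← ncard_rk_of_basis' this, Set.ncard_singleton]

lemma rk_singleton_loop (hfE : f ∈ M.E) (hf : ¬ M.Indep {f}) : rk M {f} = 0 := by
  have : M.IsBasis' ∅ {f} := by
    rw [isBasis'_iff_isBasis (singleton_subset_iff.2 hfE)]
    refine M.empty_indep.isBasis_of_subset_of_subset_closure (empty_subset _) ?_
    rw [singleton_subset_iff, M.empty_indep.mem_closure_iff']
    refine ⟨hfE, fun h => absurd (h.subset ?_) hf⟩
    simp
  rw [← ncard_rk_of_basis' this, Set.ncard_empty]

lemma rk_insert_loop (hfE : f ∈ M.E) (hf : ¬ M.Indep {f}) : rk M (insert f Z) = rk M Z := by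
  obtain ⟨I, hI⟩ := M.exists_isBasis' Z
  have : M.IsBasis' I (insert f Z) := by
    constructor
    · exact ⟨hI.indep, hI.subset.trans (subset_insert f Z)⟩
    · rintro K ⟨hKind, hKsub⟩ hIK
      have hfK : f ∉ K := fun hfK => hf (hKind.subset (singleton_subset_iff.2 hfK))
      have hKZ : K ⊆ Z := fun y hy => ((hKsub hy).resolve_left (fun h => hfK (h ▸ hy)))
      exact hI.2 ⟨hKind, hKZ⟩ hIK
  rw [← ncard_rk_of_basis' this, ncard_rk_of_basis' hI]

/-- the independent sets of a single-element contraction are independent in `M` -/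
lemma con_one_indep_of_indep (hfE : f ∈ M.E) (hI : (M.con {f}).Indep I) : M.Indep I := by
  by_cases hf : M.Indep {f}
  · rw [con_one_indep hfE hf] at hI
    exact hI.2.subset (subset_insert f I)
  · rw [con_one_eq_del hfE hf] at hI
    exact hI.of_restrict

lemma rk_con (hfin : M.E.Finite) (hfE : f ∈ M.E) (hZ : Z ⊆ M.E \ {f}) :
    rk (M.con {f}) Z + rk M {f} = rk M (insert f Z) := by
  by_cases hf : M.Indep {f}
  · obtain ⟨I, hI⟩ := (M.con {f}).exists_isBasis' Z
    have hfI : f ∉ I := ((con_one_indep hfE hf).1 hI.indep).1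
    have hins : M.Indep (insert f I) := ((con_one_indep hfE hf).1 hI.indep).2
    have hbasis : M.IsBasis' (insert f I) (insert f Z) := by
      constructor
      · exact ⟨hins, insert_subset_insert (hI.subset.trans (le_refl _))⟩
      · rintro K ⟨hKind, hKsub⟩ hIK
        have hfK : f ∈ K := hIK (mem_insert f I)
        have hKf : (M.con {f}).Indep (K \ {f}) := by
          rw [con_one_indep hfE hf]
          refine ⟨by simp, ?_⟩
          rwa [insert_diff_singleton, insert_eq_of_mem hfK]
        have hKZ : K \ {f} ⊆ Z := by
          intro y hy
          rcases hKsub hy.1 with h | h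
          · exact absurd h hy.2
          · exact h
        have : K \ {f} ⊆ I := hI.2 ⟨hKf, hKZ⟩ (by
          intro y hy
          exact ⟨hIK (mem_insert_of_mem f hy), fun h => hfI (h ▸ hy)⟩)
        intro y hy
        rcases eq_or_ne y f with rfl | hyf
        · exact mem_insert _ _
        · exact mem_insert_of_mem _ (this ⟨hy, hyf⟩)
    rw [← ncard_rk_of_basis' hI, ← ncard_rk_of_basis' hbasis, rk_singleton_nonloop hf,
      Set.ncard_insert_of_notMem hfI (hfin.subset (hI.indep.subset_ground.trans
        (by rw [con_ground]; exact diff_subset)))]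
  · rw [con_one_eq_del hfE hf, rk_restrict hZ, rk_singleton_loop hfE hf, rk_insert_loop hfE hf]
    omega

lemma rk_con_le (hfin : M.E.Finite) (hfE : f ∈ M.E) (hZ : Z ⊆ M.E \ {f}) :
    rk (M.con {f}) Z ≤ rk M Z := by
  obtain ⟨I, hI⟩ := (M.con {f}).exists_isBasis' Z
  rw [← ncard_rk_of_basis' hI]
  exact indep_ncard_le_rk hfin (con_one_indep_of_indep hfE hI.indep) hI.subset
lemma cover_step (M N : Matroid α) (S : Set α) (x : α) (hMfin : M.E.Finite) (hNfin : N.E.Finite)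
    (hSM : S ⊆ M.E) (hSN : S ⊆ N.E) (hx : x ∈ S) (hMx : M.Indep {x})
    (hCM : ∀ Z, Z ⊆ S \ {x} → Z.ncard ≤ rk (M.con {x}) Z + rk N Z)
    (IH : ∀ (M' N' : Matroid α) (S' : Set α), M'.E.Finite → N'.E.Finite → S' ⊆ M'.E →
      S' ⊆ N'.E → S'.ncard < S.ncard →
      (∀ Z, Z ⊆ S' → Z.ncard ≤ rk M' Z + rk N' Z) →
      ∃ I J, M'.Indep I ∧ N'.Indep J ∧ Disjoint I J ∧ I ∪ J = S') :
    ∃ I J, M.Indep I ∧ N.Indep J ∧ Disjoint I J ∧ I ∪ J = S := by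
  have hxM : x ∈ M.E := hSM hx
  have hfinS : S.Finite := hMfin.subset hSM
  have hlt : (S \ {x}).ncard < S.ncard := Set.ncard_diff_singleton_lt_of_mem hx hfinS
  obtain ⟨I', J, hI', hJ, hdisj, hunion⟩ := IH (M.con {x}) N (S \ {x})
    (hMfin.subset (by rw [con_ground]; exact diff_subset))
    hNfin
    (by rw [con_ground]; exact diff_subset_diff_left hSM)
    (diff_subset.trans hSN) hlt hCM
  obtain ⟨hxI', hind⟩ := (con_one_indep hxM hMx).1 hI'
  have hxJ : x ∉ J := fun hxJ => (hunion ▸ (mem_union_right I' hxJ) : x ∈ S \ {x}).2 rfl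
  refine ⟨insert x I', J, hind, hJ, ?_, ?_⟩
  · rw [Set.disjoint_left]
    rintro a (rfl | haI)
    · exact hxJ
    · exact fun haJ => hdisj.le_bot ⟨haI, haJ⟩
  · rw [insert_union, hunion, insert_diff_singleton, insert_eq_of_mem hx]

theorem cover_lemma (M N : Matroid α) (S : Set α) (hMfin : M.E.Finite) (hNfin : N.E.Finite)
    (hSM : S ⊆ M.E) (hSN : S ⊆ N.E)
    (h : ∀ Z, Z ⊆ S → Z.ncard ≤ rk M Z + rk N Z) :
    ∃ I J, M.Indep I ∧ N.Indep J ∧ Disjoint I J ∧ I ∪ J = S := by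
  suffices H : ∀ (n : ℕ) (M N : Matroid α) (S : Set α), M.E.Finite → N.E.Finite → S ⊆ M.E →
      S ⊆ N.E → S.ncard = n → (∀ Z, Z ⊆ S → Z.ncard ≤ rk M Z + rk N Z) →
      ∃ I J, M.Indep I ∧ N.Indep J ∧ Disjoint I J ∧ I ∪ J = S by
    exact H S.ncard M N S hMfin hNfin hSM hSN rfl h
  clear hMfin hNfin hSM hSN h M N S
  intro n
  induction n using Nat.strong_induction_on with
  | _ n IH =>
  intro M N S hMfin hNfin hSM hSN hn h
  rcases S.eq_empty_or_nonempty with rfl | ⟨x, hx⟩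
  · exact ⟨∅, ∅, M.empty_indep, N.empty_indep, disjoint_empty _, union_empty _⟩
  have hfinS : S.Finite := hMfin.subset hSM
  have hlt : (S \ {x}).ncard < S.ncard := Set.ncard_diff_singleton_lt_of_mem hx hfinS
  have IH' : ∀ (M' N' : Matroid α) (S' : Set α), M'.E.Finite → N'.E.Finite → S' ⊆ M'.E →
      S' ⊆ N'.E → S'.ncard < S.ncard →
      (∀ Z, Z ⊆ S' → Z.ncard ≤ rk M' Z + rk N' Z) →
      ∃ I J, M'.Indep I ∧ N'.Indep J ∧ Disjoint I J ∧ I ∪ J = S' := by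
    intro M' N' S' h1 h2 h3 h4 h5 h6
    exact IH S'.ncard (hn ▸ h5) M' N' S' h1 h2 h3 h4 rfl h6
  have hZME : ∀ Z, Z ⊆ S \ {x} → Z ⊆ M.E \ {x} := fun Z hZ => hZ.trans (diff_subset_diff_left hSM)
  have hZNE : ∀ Z, Z ⊆ S \ {x} → Z ⊆ N.E \ {x} := fun Z hZ => hZ.trans (diff_subset_diff_left hSN)
  have hcardins : ∀ Z : Set α, Z ⊆ S \ {x} → (insert x Z).ncard = Z.ncard + 1 := by
    intro Z hZ
    exact Set.ncard_insert_of_notMem (fun hxZ => (hZ hxZ).2 rfl) (hfinS.subset (hZ.trans diff_subset))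
  by_cases hMx : M.Indep {x}
  · by_cases hCM : ∀ Z, Z ⊆ S \ {x} → Z.ncard ≤ rk (M.con {x}) Z + rk N Z
    · exact cover_step M N S x hMfin hNfin hSM hSN hx hMx hCM IH'
    · have hNx : N.Indep {x} := by
        by_contra hNx
        apply hCM
        intro Z hZ
        have h1 := h (insert x Z) (insert_subset hx (hZ.trans diff_subset))
        rw [rk_insert_loop (hSN hx) hNx] at h1
        have h2 := rk_con hMfin (hSM hx) (hZME Z hZ)
        rw [rk_singleton_nonloop hMx] at h2
        have h3 := hcardins Z hZ
        omega
      by_cases hCN : ∀ Z, Z ⊆ S \ {x} → Z.ncard ≤ rk (N.con {x}) Z + rk M Z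
      · obtain ⟨J, I, hJ, hI, hdisj, hunion⟩ := cover_step N M S x hNfin hMfin hSN hSM hx hNx hCN
          (fun M' N' S' h1 h2 h3 h4 h5 h6 => by
            obtain ⟨I, J, a, b, c, d⟩ := IH' M' N' S' h1 h2 h3 h4 h5 h6
            exact ⟨I, J, a, b, c, d⟩)
        exact ⟨I, J, hI, hJ, hdisj.symm, by rw [union_comm]; exact hunion⟩
      · push_neg at hCM hCN
        obtain ⟨A, hA, hAlt⟩ := hCM
        obtain ⟨B, hB, hBlt⟩ := hCN
        have hxA : x ∉ A := fun hh => (hA hh).2 rfl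
        have hxB : x ∉ B := fun hh => (hB hh).2 rfl
        have h2A := rk_con hMfin (hSM hx) (hZME A hA)
        rw [rk_singleton_nonloop hMx] at h2A
        have h2B := rk_con hNfin (hSN hx) (hZNE B hB)
        rw [rk_singleton_nonloop hNx] at h2B
        -- submodularity
        have hsubM : rk M (insert x (A ∪ B)) + rk M (A ∩ B) ≤ rk M (insert x A) + rk M B := by
          have := rk_submod (M := M) hMfin (A := insert x A) (B := B)
            (insert_subset (hSM hx) ((hA.trans diff_subset).trans hSM))
            ((hB.trans diff_subset).trans hSM)
          rwa [insert_union, insert_inter_of_notMem hxB] at this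
        have hsubN : rk N (insert x (A ∪ B)) + rk N (A ∩ B) ≤ rk N A + rk N (insert x B) := by
          have := rk_submod (M := N) hNfin (A := A) (B := insert x B)
            ((hA.trans diff_subset).trans hSN)
            (insert_subset (hSN hx) ((hB.trans diff_subset).trans hSN))
          rwa [union_insert, inter_insert_of_notMem hxA] at this
        have hAB1 := h (A ∩ B) ((inter_subset_left.trans hA).trans diff_subset)
        have hAB2 := h (insert x (A ∪ B))
          (insert_subset hx (((union_subset hA hB).trans diff_subset)))
        have hc1 : (insert x (A ∪ B)).ncard = (A ∪ B).ncard + 1 :=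
          hcardins _ (union_subset hA hB)
        have hc2 : (A ∪ B).ncard + (A ∩ B).ncard = A.ncard + B.ncard :=
          Set.ncard_union_add_ncard_inter A B (hfinS.subset (hA.trans diff_subset))
            (hfinS.subset (hB.trans diff_subset))
        omega
  · have hNx : N.Indep {x} := by
      by_contra hNx
      have h1 := h {x} (singleton_subset_iff.2 hx)
      rw [rk_singleton_loop (hSM hx) hMx, rk_singleton_loop (hSN hx) hNx,
        Set.ncard_singleton] at h1
      omega
    have hCN : ∀ Z, Z ⊆ S \ {x} → Z.ncard ≤ rk (N.con {x}) Z + rk M Z := by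
      intro Z hZ
      have h1 := h (insert x Z) (insert_subset hx (hZ.trans diff_subset))
      rw [rk_insert_loop (hSM hx) hMx] at h1
      have h2 := rk_con hNfin (hSN hx) (hZNE Z hZ)
      rw [rk_singleton_nonloop hNx] at h2
      have h3 := hcardins Z hZ
      omega
    obtain ⟨J, I, hJ, hI, hdisj, hunion⟩ := cover_step N M S x hNfin hMfin hSN hSM hx hNx hCN
      (fun M' N' S' h1 h2 h3 h4 h5 h6 => IH' M' N' S' h1 h2 h3 h4 h5 h6)
    exact ⟨I, J, hI, hJ, hdisj.symm, by rw [union_comm]; exact hunion⟩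
lemma min_deficient (M N : Matroid α) (Z₀ : Set α) (hMfin : M.E.Finite) (hNfin : N.E.Finite)
    (hZM : Z₀ ⊆ M.E) (hZN : Z₀ ⊆ N.E) (hdef : rk M Z₀ + rk N Z₀ < Z₀.ncard) :
    ∃ Y, Y ⊆ Z₀ ∧ Y.Nonempty ∧ rk M Y + rk N Y + 1 = Y.ncard ∧
      (∀ Z, Z ⊆ Y → Z ≠ Y → Z.ncard ≤ rk M Z + rk N Z) ∧
      (∀ y ∈ Y, ∃ I J, M.Indep I ∧ N.Indep J ∧ Disjoint I J ∧ I ∪ J = Y \ {y} ∧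
        I.ncard = rk M Y ∧ J.ncard = rk N Y ∧
        (M ↾ Y).Spanning I ∧ (N ↾ Y).Spanning J) := by
  set T : Set ℕ := {n | ∃ Y, Y ⊆ Z₀ ∧ rk M Y + rk N Y < Y.ncard ∧ Y.ncard = n} with hT
  have hTne : T.Nonempty := ⟨Z₀.ncard, Z₀, le_refl _, hdef, rfl⟩
  obtain ⟨Y, hYZ, hYdef, hYcard⟩ := Nat.sInf_mem hTne
  have hYM : Y ⊆ M.E := hYZ.trans hZM
  have hYN : Y ⊆ N.E := hYZ.trans hZN
  have hYfin : Y.Finite := hMfin.subset hYM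
  have h3 : ∀ Z, Z ⊆ Y → Z ≠ Y → Z.ncard ≤ rk M Z + rk N Z := by
    intro Z hZY hZne
    by_contra hcon
    push_neg at hcon
    have hlt : Z.ncard < Y.ncard := Set.ncard_lt_ncard (hZY.ssubset_of_ne hZne) hYfin
    have : Z.ncard ∈ T := ⟨Z, hZY.trans hYZ, hcon, rfl⟩
    have := Nat.sInf_le this
    omega
  have hYne : Y.Nonempty := by
    rw [Set.nonempty_iff_ne_empty]
    rintro rfl
    simp at hYdef
  have hkey : ∀ y ∈ Y, rk M (Y \ {y}) = rk M Y ∧ rk N (Y \ {y}) = rk N Y ∧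
      rk M Y + rk N Y + 1 = Y.ncard := by
    intro y hy
    have h1 := h3 (Y \ {y}) diff_subset (by
      intro heq
      have : y ∈ Y \ {y} := by rw [heq]; exact hy
      exact this.2 rfl)
    have h2 : (Y \ {y}).ncard = Y.ncard - 1 := Set.ncard_diff_singleton_of_mem hy
    have h4 : rk M (Y \ {y}) ≤ rk M Y := rk_mono hMfin diff_subset
    have h5 : rk N (Y \ {y}) ≤ rk N Y := rk_mono hNfin diff_subset
    have h6 : 1 ≤ Y.ncard := by
      have := Set.ncard_pos hYfin |>.2 hYne
      omega
    omega
  obtain ⟨y₀, hy₀⟩ := hYne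
  refine ⟨Y, hYZ, ⟨y₀, hy₀⟩, (hkey y₀ hy₀).2.2, h3, ?_⟩
  intro y hy
  obtain ⟨hrM, hrN, hsum⟩ := hkey y hy
  obtain ⟨I, J, hI, hJ, hdisj, hunion⟩ := cover_lemma M N (Y \ {y}) hMfin hNfin
    (diff_subset.trans hYM) (diff_subset.trans hYN)
    (fun Z hZ => h3 Z (hZ.trans diff_subset) (by
      intro heq
      have : y ∈ Y \ {y} := hZ (by rw [← heq] at hy; exact hy)
      exact this.2 rfl))
  have hIY : I ⊆ Y \ {y} := hunion ▸ subset_union_left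
  have hJY : J ⊆ Y \ {y} := hunion ▸ subset_union_right
  have hIcard : I.ncard ≤ rk M Y := by
    rw [← hrM]; exact indep_ncard_le_rk hMfin hI hIY
  have hJcard : J.ncard ≤ rk N Y := by
    rw [← hrN]; exact indep_ncard_le_rk hNfin hJ hJY
  have hsumIJ : I.ncard + J.ncard = (Y \ {y}).ncard := by
    rw [← hunion]
    exact (Set.ncard_union_eq hdisj (hYfin.subset (hIY.trans diff_subset))
      (hYfin.subset (hJY.trans diff_subset))).symm
  have hYc : (Y \ {y}).ncard = Y.ncard - 1 := Set.ncard_diff_singleton_of_mem hy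
  have hIeq : I.ncard = rk M Y := by omega
  have hJeq : J.ncard = rk N Y := by omega
  refine ⟨I, J, hI, hJ, hdisj, hunion, hIeq, hJeq, ?_, ?_⟩
  · exact spanning_restrict_of_rk_le hMfin hI (hIY.trans diff_subset) hYM (le_of_eq hIeq.symm)
  · exact spanning_restrict_of_rk_le hNfin hJ (hJY.trans diff_subset) hYN (le_of_eq hJeq.symm)
end MIAux

open MIAux in
/-- If every nonempty wave for `(M, N)` contains `e`, then in `(M/f, N\f)`
either `E - f` is a cowave or there is a hindrance focusing on `e`. -/
theorem cowave_or_hindrance_focus (M N : Matroid α) (hE : M.E = N.E) (hfin : M.E.Finite)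
    (e f : α) (he : e ∈ M.E) (hf : f ∈ M.E) (hef : e ≠ f)
    (hyp : ∀ X SM SN, IsWave M N X SM SN → X.Nonempty → e ∈ X) :
    (∃ TM TN, IsWave (M.con {f})✶ (N.del {f})✶ (M.E \ {f}) TM TN) ∨
    (∃ X SM SN, IsWave (M.con {f}) (N.del {f}) X SM SN ∧ e ∈ X ∧ e ∉ SM ∧ e ∉ SN) := by
  classical
  have hNfin : N.E.Finite := hE ▸ hfin
  have hfN : f ∈ N.E := hE ▸ hf
  set E' : Set α := M.E \ {f} with hE'
  set M' : Matroid α := M.con {f} with hM'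
  set N' : Matroid α := N.del {f} with hN'
  have hM'E : M'.E = E' := con_ground M {f}
  have hN'E : N'.E = E' := by
    rw [hN', Matroid.del, restrict_ground_eq, ← hE]
  have hM'fin : M'.E.Finite := by rw [hM'E]; exact hfin.subset diff_subset
  have hN'fin : N'.E.Finite := by rw [hN'E]; exact hfin.subset diff_subset
  have hrkN' : ∀ Z : Set α, Z ⊆ E' → rk N' Z = rk N Z := by
    intro Z hZ
    rw [hN', Matroid.del]
    exact rk_restrict (by rw [← hE]; exact hZ)
  by_cases hP : ∀ Z, Z ⊆ E' → Z.ncard ≤ rk M' Z + rk N' Z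
  · left
    obtain ⟨I, J, hI, hJ, hdisj, hunion⟩ := cover_lemma M' N' E' hM'fin hN'fin
      (by rw [hM'E]) (by rw [hN'E]) hP
    have hIE' : I ⊆ E' := hunion ▸ subset_union_left
    have hJE' : J ⊆ E' := hunion ▸ subset_union_right
    have hresM : M'✶ ↾ E' = M'✶ := by
      nth_rewrite 1 [show E' = M'✶.E by rw [dual_ground, hM'E]]
      exact restrict_ground_eq_self _
    have hresN : N'✶ ↾ E' = N'✶ := by
      nth_rewrite 1 [show E' = N'✶.E by rw [dual_ground, hN'E]]
      exact restrict_ground_eq_self _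
    refine ⟨E' \ I, I, diff_subset, hIE', ?_, disjoint_sdiff_left, ?_, ?_⟩
    · rw [dual_ground, hM'E]
    · rw [hresM]
      have : M'✶.Coindep I := dual_coindep_iff.2 hI
      have hsp := this.compl_spanning
      rwa [dual_ground, hM'E] at hsp
    · rw [hresN]
      have : N'✶.Coindep J := dual_coindep_iff.2 hJ
      have hsp := this.compl_spanning
      rw [dual_ground, hN'E] at hsp
      have hEJ : E' \ J = I := by
        rw [← hunion, union_diff_right, hdisj.sdiff_eq_left]
      rwa [hEJ] at hsp
  · right
    push_neg at hP
    obtain ⟨Z₀, hZ₀sub, hZ₀def⟩ := hP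
    obtain ⟨Y, hYZ, hYne, hYsum, hYmin, hYcover⟩ := min_deficient M' N' Z₀ hM'fin hN'fin
      (by rw [hM'E]; exact hZ₀sub) (by rw [hN'E]; exact hZ₀sub) hZ₀def
    have hYE' : Y ⊆ E' := hYZ.trans hZ₀sub
    have hYME : Y ⊆ M.E := hYE'.trans diff_subset
    have hYNE : Y ⊆ N.E := by rw [← hE]; exact hYME
    have hrN : rk N' Y = rk N Y := hrkN' Y hYE'
    have hconY : rk M' Y + rk M {f} = rk M (insert f Y) := rk_con hfin hf hYE'
    have hrle : rk M' Y ≤ rk M Y := rk_con_le hfin hf hYE'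
    have hmle : rk M Y ≤ rk M (insert f Y) := rk_mono hfin (subset_insert f Y)
    have hf1 : rk M {f} ≤ 1 := rk_singleton_le M f
    have heY : e ∈ Y := by
      by_cases hcase : rk M Y = rk M' Y + 1
      · obtain ⟨I', J', hI', hJ', hdisj', hunion'⟩ := cover_lemma M N Y hfin hNfin hYME hYNE
          (fun Z hZ => by
            rcases eq_or_ne Z Y with rfl | hne
            · omega
            · have h1 := hYmin Z hZ hne
              have h2 : rk M' Z ≤ rk M Z := rk_con_le hfin hf (hZ.trans hYE')
              have h3 : rk N' Z = rk N Z := hrkN' Z (hZ.trans hYE')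
              omega)
        have hI'Y : I' ⊆ Y := hunion' ▸ subset_union_left
        have hJ'Y : J' ⊆ Y := hunion' ▸ subset_union_right
        have hc1 : I'.ncard ≤ rk M Y := indep_ncard_le_rk hfin hI' hI'Y
        have hc2 : J'.ncard ≤ rk N Y := indep_ncard_le_rk hNfin hJ' hJ'Y
        have hc3 : I'.ncard + J'.ncard = Y.ncard := by
          rw [← hunion']
          exact (Set.ncard_union_eq hdisj' (hfin.subset (hI'Y.trans hYME))
            (hfin.subset (hJ'Y.trans hYME))).symm
        have hspI : (M ↾ Y).Spanning I' :=
          spanning_restrict_of_rk_le hfin hI' hI'Y hYME (by omega)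
        have hspJ : (N ↾ Y).Spanning J' :=
          spanning_restrict_of_rk_le hNfin hJ' hJ'Y hYNE (by omega)
        exact hyp Y I' J' ⟨hI'Y, hJ'Y, hYME, hdisj', hspI, hspJ⟩ hYne
      · have hdefMN : rk M Y + rk N Y < Y.ncard := by omega
        obtain ⟨Y'', hY''sub, hY''ne, _, _, hcov''⟩ := min_deficient M N Y hfin hNfin hYME hYNE hdefMN
        obtain ⟨y'', hy''⟩ := hY''ne
        obtain ⟨I'', J'', hI'', hJ'', hdisj'', hunion'', _, _, hspM'', hspN''⟩ := hcov'' y'' hy''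
        have hI''Y : I'' ⊆ Y'' := (hunion'' ▸ subset_union_left).trans diff_subset
        have hJ''Y : J'' ⊆ Y'' := (hunion'' ▸ subset_union_right).trans diff_subset
        exact hY''sub (hyp Y'' I'' J'' ⟨hI''Y, hJ''Y, hY''sub.trans hYME, hdisj'', hspM'', hspN''⟩
          ⟨y'', hy''⟩)
    obtain ⟨I, J, hI, hJ, hdisj, hunion, _, _, hspM, hspN⟩ := hYcover e heY
    have hIYe : I ⊆ Y \ {e} := hunion ▸ subset_union_left
    have hJYe : J ⊆ Y \ {e} := hunion ▸ subset_union_right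
    exact ⟨Y, I, J, ⟨hIYe.trans diff_subset, hJYe.trans diff_subset,
      by rw [hM'E]; exact hYE', hdisj, hspM, hspN⟩, heY,
      fun heI => (hIYe heI).2 rfl, fun heJ => (hJYe heJ).2 rfl⟩
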